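/- Fix an integer N ≥ 0 and real numbers x, y, ε. Let z ∈ ℝ⟦t⟧ be the formal power series z = Σ_{k≥0} ( P_k^{(N,ε)}(x,y) / (k!·(k+1)!) ) t^k. Then, with z′ and z″ denoting the first and second formal derivatives of z with respect to t, the formal power series identity t(1+t)·z″ + (2 − (x − 3 − 2ε)t − x t²)·z′ − ( (x + y − 1 − 2ε) − (N−1)x·t )·z = 0 holds in ℝ⟦t⟧. -/

import Mathlib

open PowerSeries

/-- The constraint polynomials `P_k^{(N,ε)}(x,y)` of the asymmetric quantum Rabi model,
as real-valued functions, defined by the three-term recurrence. -/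
def constraintPoly (N : ℕ) (ε x y : ℝ) : ℕ → ℝ
  | 0 => 1
  | 1 => x + y - 1 - 2 * ε
  | k + 2 =>
      (((k : ℝ) + 2) * x + y - ((k : ℝ) + 2) * (((k : ℝ) + 2) + 2 * ε)) *
          constraintPoly N ε x y (k + 1) -
        ((k : ℝ) + 2) * ((k : ℝ) + 1) * ((N : ℝ) - ((k : ℝ) + 1)) * x *
          constraintPoly N ε x y k

/-- The generating function `z = Σ_{k≥0} (P_k^{(N,ε)}(x,y)/(k!(k+1)!)) t^k ∈ ℝ⟦t⟧`. -/
noncomputable def genFun (N : ℕ) (ε x y : ℝ) : PowerSeries ℝ :=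
  PowerSeries.mk fun k =>
    constraintPoly N ε x y k / ((k.factorial : ℝ) * ((k + 1).factorial : ℝ))

lemma cp_rec (N : ℕ) (ε x y : ℝ) (k : ℕ) :
    constraintPoly N ε x y (k + 2) =
      (((k : ℝ) + 2) * x + y - ((k : ℝ) + 2) * (((k : ℝ) + 2) + 2 * ε)) *
          constraintPoly N ε x y (k + 1) -
        ((k : ℝ) + 2) * ((k : ℝ) + 1) * ((N : ℝ) - ((k : ℝ) + 1)) * x *
          constraintPoly N ε x y k := rfl

/-- the generating function `z` of the normalized constraint polynomials
satisfies the confluent Heun differential equation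
`t(1+t) z'' + (2 - (x-3-2ε)t - x t²) z' - ((x+y-1-2ε) - (N-1)x t) z = 0` in `ℝ⟦t⟧`. -/
theorem genFun_heun_ode (N : ℕ) (ε x y : ℝ) :
    PowerSeries.X * (1 + PowerSeries.X) *
        (genFun N ε x y).derivativeFun.derivativeFun +
      (C (R := ℝ) 2 - C (R := ℝ) (x - 3 - 2 * ε) * PowerSeries.X - C (R := ℝ) x * PowerSeries.X ^ 2) *
        (genFun N ε x y).derivativeFun -
      (C (R := ℝ) (x + y - 1 - 2 * ε) - C (R := ℝ) (((N : ℝ) - 1) * x) * PowerSeries.X) *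
        genFun N ε x y = 0 := by
  set z := genFun N ε x y with hz
  set A := z.derivativeFun.derivativeFun with hA
  set B := z.derivativeFun with hB
  have hexp :
      PowerSeries.X * (1 + PowerSeries.X) * A +
        (C (R := ℝ) 2 - C (R := ℝ) (x - 3 - 2 * ε) * PowerSeries.X - C (R := ℝ) x * PowerSeries.X ^ 2) * B -
        (C (R := ℝ) (x + y - 1 - 2 * ε) - C (R := ℝ) (((N : ℝ) - 1) * x) * PowerSeries.X) * z =
      PowerSeries.X * A + PowerSeries.X * (PowerSeries.X * A) + C (R := ℝ) 2 * B -
        C (R := ℝ) (x - 3 - 2 * ε) * (PowerSeries.X * B) -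
        C (R := ℝ) x * (PowerSeries.X * (PowerSeries.X * B)) -
        C (R := ℝ) (x + y - 1 - 2 * ε) * z + C (R := ℝ) (((N : ℝ) - 1) * x) * (PowerSeries.X * z) := by
    ring
  rw [hexp]
  ext n
  simp only [LinearMap.map_add, LinearMap.map_sub, coeff_C_mul, map_zero]
  have hcz : ∀ m : ℕ, coeff m z =
      constraintPoly N ε x y m / ((m.factorial : ℝ) * ((m + 1).factorial : ℝ)) := by
    intro m; rw [hz, genFun, coeff_mk]
  have hcB : ∀ m : ℕ, coeff m B = coeff (m + 1) z * (m + 1) := fun m =>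
    coeff_derivativeFun z m
  have hcA : ∀ m : ℕ, coeff m A = coeff (m + 2) z * ((m + 2) * (m + 1)) := by
    intro m
    rw [hA, show coeff m B.derivativeFun = coeff (m + 1) B * (m + 1) from coeff_derivativeFun B m, hcB]
    push_cast; ring
  match n with
  | 0 =>
    rw [coeff_zero_X_mul, coeff_zero_X_mul, coeff_zero_X_mul, coeff_zero_X_mul]
    simp only [hcB, hcz]
    simp [constraintPoly, Nat.factorial]
    ring
  | 1 =>
    rw [coeff_succ_X_mul, coeff_succ_X_mul, coeff_zero_X_mul, coeff_succ_X_mul,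
      coeff_succ_X_mul, coeff_zero_X_mul, coeff_succ_X_mul]
    simp only [hcA, hcB, hcz]
    rw [show (0:ℕ)+2 = 0+2 from rfl, cp_rec]
    simp [constraintPoly, Nat.factorial]
    ring
  | (n + 2) =>
    rw [coeff_succ_X_mul, coeff_succ_X_mul, coeff_succ_X_mul, coeff_succ_X_mul,
      coeff_succ_X_mul, coeff_succ_X_mul, coeff_succ_X_mul]
    simp only [hcA, hcB, hcz]
    rw [cp_rec N ε x y (n+1)]
    have h0 : ((n.factorial : ℝ)) ≠ 0 := by positivity
    have h1 : ((n:ℝ) + 1) ≠ 0 := by positivity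
    have h2 : ((n:ℝ) + 2) ≠ 0 := by positivity
    have h3 : ((n:ℝ) + 3) ≠ 0 := by positivity
    have h4 : ((n:ℝ) + 4) ≠ 0 := by positivity
    push_cast [Nat.factorial_succ]
    field_simp
    ring
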